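/- Let f : ℝ^p → ℝ be twice continuously differentiable with L-Lipschitz Hessian. Let θ ∈ ℝ^p, and suppose g(θ) ∈ ℝ^p and H(θ) ∈ ℝ^{p×p} with H(θ) invertible satisfy ‖g(θ) − ∇f(θ)‖₂ ≤ γ_g and ‖H(θ) − ∇²f(θ)‖₂ ≤ γ_h. Then, with Δθ_nt = −H(θ)⁻¹g(θ): ‖∇f(θ + Δθ_nt)‖₂ ≤ (L/2)‖Δθ_nt‖₂² + γ_g + γ_h‖Δθ_nt‖₂. -/

import Mathlib

open scoped RealInnerProductSpace

/-- The Hessian of `f`, as the Fréchet derivative of the gradient. -/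
noncomputable def hessianOf {p : ℕ} (f : EuclideanSpace ℝ (Fin p) → ℝ)
    (θ : EuclideanSpace ℝ (Fin p)) :
    EuclideanSpace ℝ (Fin p) →L[ℝ] EuclideanSpace ℝ (Fin p) :=
  fderiv ℝ (gradient f) θ

lemma gradient_contDiff {p : ℕ} (f : EuclideanSpace ℝ (Fin p) → ℝ)
    (hf : ContDiff ℝ 2 f) : ContDiff ℝ 1 (gradient f) := by
  have h1 : ContDiff ℝ 1 (fderiv ℝ f) := hf.fderiv_right (by norm_num)
  have : gradient f = fun x =>
      (InnerProductSpace.toDual ℝ (EuclideanSpace ℝ (Fin p))).symm (fderiv ℝ f x) := rfl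
  rw [this]
  exact (InnerProductSpace.toDual ℝ
    (EuclideanSpace ℝ (Fin p))).symm.toContinuousLinearEquiv.contDiff.comp h1

/-- Taylor-type bound: the gradient after a step, versus its linearization. -/
lemma gradient_taylor_bound {p : ℕ}
    (f : EuclideanSpace ℝ (Fin p) → ℝ) (hf : ContDiff ℝ 2 f)
    (L : ℝ) (hL : 0 ≤ L)
    (hlip : ∀ θ₁ θ₂ : EuclideanSpace ℝ (Fin p),
      ‖hessianOf f θ₁ - hessianOf f θ₂‖ ≤ L * ‖θ₁ - θ₂‖)
    (θ Δ : EuclideanSpace ℝ (Fin p)) :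
    ‖gradient f (θ + Δ) - gradient f θ - hessianOf f θ Δ‖ ≤ L / 2 * ‖Δ‖ ^ 2 := by
  have hgrad : ContDiff ℝ 1 (gradient f) := gradient_contDiff f hf
  have hhess_cont : Continuous (hessianOf f) := by
    have := hgrad.fderiv_right (m := 0) (le_refl 1)
    exact this.continuous
  -- the path
  set ψ : ℝ → EuclideanSpace ℝ (Fin p) := fun t => gradient f (θ + t • Δ) with hψ
  have hline : ∀ t : ℝ, HasDerivAt (fun s : ℝ => θ + s • Δ) Δ t := fun t => by
    simpa using ((hasDerivAt_id t).smul_const Δ).const_add θ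
  have hψ' : ∀ t : ℝ, HasDerivAt ψ (hessianOf f (θ + t • Δ) Δ) t := by
    intro t
    have hfd : HasFDerivAt (gradient f) (hessianOf f (θ + t • Δ)) (θ + t • Δ) :=
      (hgrad.differentiable one_ne_zero (θ + t • Δ)).hasFDerivAt
    exact hfd.comp_hasDerivAt t (hline t)
  have hcont : Continuous fun t : ℝ => hessianOf f (θ + t • Δ) Δ := by
    have : Continuous fun t : ℝ => θ + t • Δ :=
      continuous_const.add (continuous_id.smul continuous_const)
    exact (ContinuousLinearMap.apply ℝ (EuclideanSpace ℝ (Fin p)) Δ).continuous.comp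
      (hhess_cont.comp this)
  have hint : IntervalIntegrable (fun t : ℝ => hessianOf f (θ + t • Δ) Δ)
      MeasureTheory.volume 0 1 := hcont.intervalIntegrable 0 1
  have hFTC : (∫ t in (0:ℝ)..1, hessianOf f (θ + t • Δ) Δ) = ψ 1 - ψ 0 :=
    intervalIntegral.integral_eq_sub_of_hasDerivAt (fun t _ => hψ' t) hint
  have hψ1 : ψ 1 = gradient f (θ + Δ) := by simp [hψ]
  have hψ0 : ψ 0 = gradient f θ := by simp [hψ]
  have hconst : (∫ _ in (0:ℝ)..1, hessianOf f θ Δ) = hessianOf f θ Δ := by simp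
  have hdiff : gradient f (θ + Δ) - gradient f θ - hessianOf f θ Δ
      = ∫ t in (0:ℝ)..1, (hessianOf f (θ + t • Δ) Δ - hessianOf f θ Δ) := by
    rw [intervalIntegral.integral_sub hint (intervalIntegrable_const), hFTC, hψ1, hψ0, hconst]
  rw [hdiff]
  have hb : ∀ t ∈ Set.Icc (0:ℝ) 1,
      ‖hessianOf f (θ + t • Δ) Δ - hessianOf f θ Δ‖ ≤ L * t * ‖Δ‖ ^ 2 := by
    intro t ht
    have h1 : ‖hessianOf f (θ + t • Δ) Δ - hessianOf f θ Δ‖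
        ≤ ‖hessianOf f (θ + t • Δ) - hessianOf f θ‖ * ‖Δ‖ := by
      have h := (hessianOf f (θ + t • Δ) - hessianOf f θ).le_opNorm Δ
      rwa [ContinuousLinearMap.sub_apply] at h
    have h2 : ‖hessianOf f (θ + t • Δ) - hessianOf f θ‖ ≤ L * (t * ‖Δ‖) := by
      have h := hlip (θ + t • Δ) θ
      rwa [add_sub_cancel_left, norm_smul, Real.norm_eq_abs, abs_of_nonneg ht.1] at h
    calc ‖hessianOf f (θ + t • Δ) Δ - hessianOf f θ Δ‖
        ≤ L * (t * ‖Δ‖) * ‖Δ‖ :=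
          h1.trans (mul_le_mul_of_nonneg_right h2 (norm_nonneg _))
      _ = L * t * ‖Δ‖ ^ 2 := by ring
  have hbound : ‖∫ t in (0:ℝ)..1, (hessianOf f (θ + t • Δ) Δ - hessianOf f θ Δ)‖
      ≤ |∫ t in (0:ℝ)..1, L * t * ‖Δ‖ ^ 2| := by
    apply intervalIntegral.norm_integral_le_abs_of_norm_le
    · filter_upwards [MeasureTheory.ae_restrict_mem measurableSet_Ioc] with t ht
      have ht' : t ∈ Set.Icc (0:ℝ) 1 := by
        rw [Set.uIoc_of_le (by norm_num : (0:ℝ) ≤ 1)] at ht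
        exact ⟨ht.1.le, ht.2⟩
      exact hb t ht'
    · exact Continuous.intervalIntegrable
        ((continuous_const.mul continuous_id).mul continuous_const) 0 1
  have hval : (∫ t in (0:ℝ)..1, L * t * ‖Δ‖ ^ 2) = L / 2 * ‖Δ‖ ^ 2 := by
    have : (fun t : ℝ => L * t * ‖Δ‖ ^ 2) = fun t : ℝ => (L * ‖Δ‖ ^ 2) * t := by
      funext t; ring
    rw [this, intervalIntegral.integral_const_mul, integral_id]
    ring
  rw [hval, abs_of_nonneg (by positivity)] at hbound
  exact hbound

/-- the basic Taylor-type bound on the gradient after a noisy Newton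
step, using only Lipschitzness of the Hessian and the estimation errors. -/
theorem noisy_newton_gradient_taylor_bound {p : ℕ}
    (f : EuclideanSpace ℝ (Fin p) → ℝ) (hf : ContDiff ℝ 2 f)
    (L γg γh : ℝ) (hL : 0 < L)
    (hlip : ∀ θ₁ θ₂ : EuclideanSpace ℝ (Fin p),
      ‖hessianOf f θ₁ - hessianOf f θ₂‖ ≤ L * ‖θ₁ - θ₂‖)
    (θ : EuclideanSpace ℝ (Fin p))
    (g : EuclideanSpace ℝ (Fin p))
    (H : EuclideanSpace ℝ (Fin p) →L[ℝ] EuclideanSpace ℝ (Fin p))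
    (hHinv : ∃ e : EuclideanSpace ℝ (Fin p) ≃L[ℝ] EuclideanSpace ℝ (Fin p),
      (e : EuclideanSpace ℝ (Fin p) →L[ℝ] EuclideanSpace ℝ (Fin p)) = H)
    (hg : ‖g - gradient f θ‖ ≤ γg) (hH : ‖H - hessianOf f θ‖ ≤ γh)
    (Δ : EuclideanSpace ℝ (Fin p)) (hΔ : Δ = -(H.inverse g)) :
    ‖gradient f (θ + Δ)‖ ≤ L / 2 * ‖Δ‖ ^ 2 + γg + γh * ‖Δ‖ := by
  obtain ⟨e, he⟩ := hHinv
  have hHΔ : H Δ = -g := by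
    rw [hΔ, ← he, ContinuousLinearMap.inverse_equiv]
    simp
  have hkey : gradient f (θ + Δ)
      = (gradient f (θ + Δ) - gradient f θ - hessianOf f θ Δ)
        + (gradient f θ - g) + (hessianOf f θ Δ - H Δ) := by
    rw [hHΔ]; abel
  have h1 : ‖gradient f (θ + Δ) - gradient f θ - hessianOf f θ Δ‖ ≤ L / 2 * ‖Δ‖ ^ 2 :=
    gradient_taylor_bound f hf L hL.le hlip θ Δ
  have h2 : ‖gradient f θ - g‖ ≤ γg := by rwa [norm_sub_rev] at hg
  have h3 : ‖hessianOf f θ Δ - H Δ‖ ≤ γh * ‖Δ‖ := by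
    have : hessianOf f θ Δ - H Δ = -((H - hessianOf f θ) Δ) := by
      rw [ContinuousLinearMap.sub_apply]; abel
    rw [this, norm_neg]
    exact ((H - hessianOf f θ).le_opNorm Δ).trans
      (mul_le_mul_of_nonneg_right hH (norm_nonneg _))
  calc ‖gradient f (θ + Δ)‖
      = ‖(gradient f (θ + Δ) - gradient f θ - hessianOf f θ Δ)
          + (gradient f θ - g) + (hessianOf f θ Δ - H Δ)‖ := by rw [← hkey]
    _ ≤ ‖gradient f (θ + Δ) - gradient f θ - hessianOf f θ Δ‖
        + ‖gradient f θ - g‖ + ‖hessianOf f θ Δ - H Δ‖ := norm_add₃_le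
    _ ≤ L / 2 * ‖Δ‖ ^ 2 + γg + γh * ‖Δ‖ := by
        exact add_le_add (add_le_add h1 h2) h3
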